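/- For λ, x real and n ∈ ℕ, the generalized Laguerre polynomials satisfy the rescaling identity L_n^{(a)}(λx) = (1−λ)^n Σ_{k=0}^n C(n+a, n−k) (λ/(1−λ))^k L_k^{(a)}(x) for λ ≠ 1, where C denotes the binomial coefficient. -/

import Mathlib

open Finset

/-- Generalized Laguerre polynomial `L_n^{(a)}(x) = Σ_{k=0}^n (-1)^k C(n+a, n-k) x^k / k!`. -/
noncomputable def laguerre (a n : ℕ) (x : ℝ) : ℝ :=
  ∑ k ∈ range (n + 1),
    (-1) ^ k * (Nat.choose (n + a) (n - k) : ℝ) * x ^ k / (Nat.factorial k : ℝ)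

lemma choose_key (a n j k : ℕ) (hjk : j ≤ k) (hkn : k ≤ n) :
    Nat.choose (n + a) (n - k) * Nat.choose (k + a) (k - j)
      = Nat.choose (n + a) (n - j) * Nat.choose (n - j) (k - j) := by
  have h1 : Nat.choose (n + a) (n - k) = Nat.choose (n + a) (k + a) := by
    rw [← Nat.choose_symm (by omega : n - k ≤ n + a)]
    congr 1; omega
  have h2 : Nat.choose (k + a) (k - j) = Nat.choose (k + a) (a + j) := by
    rw [← Nat.choose_symm (by omega : k - j ≤ k + a)]
    congr 1; omega
  have h3 : Nat.choose (n + a) (n - j) = Nat.choose (n + a) (a + j) := by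
    rw [← Nat.choose_symm (by omega : n - j ≤ n + a)]
    congr 1; omega
  rw [h1, h2, h3, Nat.choose_mul (by omega)]
  congr 2 <;> omega

lemma sum_key (n j : ℕ) (hj : j ≤ n) (lam : ℝ) :
    ∑ k ∈ Finset.Ico j (n + 1), (Nat.choose (n - j) (k - j) : ℝ)
        * (lam ^ k * (1 - lam) ^ (n - k)) = lam ^ j := by
  rw [Finset.sum_Ico_eq_sum_range]
  have hrange : n + 1 - j = (n - j) + 1 := by omega
  rw [hrange]
  have : ∀ m ∈ range ((n - j) + 1),
      (Nat.choose (n - j) (j + m - j) : ℝ) * (lam ^ (j + m) * (1 - lam) ^ (n - (j + m)))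
        = lam ^ j * (lam ^ m * (1 - lam) ^ ((n - j) - m) * (Nat.choose (n - j) m : ℝ)) := by
    intro m hm
    have hm' : m ≤ n - j := Nat.lt_succ_iff.mp (Finset.mem_range.mp hm)
    have e1 : j + m - j = m := by omega
    have e2 : n - (j + m) = (n - j) - m := by omega
    rw [e1, e2, pow_add]
    ring
  rw [Finset.sum_congr rfl this, ← Finset.mul_sum, ← add_pow]
  norm_num

/-- Rescaling identity for generalized Laguerre polynomials. -/
theorem laguerre_rescaling (a n : ℕ) (lam x : ℝ) (hlam : lam ≠ 1) :
    laguerre a n (lam * x)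
      = (1 - lam) ^ n * ∑ k ∈ range (n + 1),
          (Nat.choose (n + a) (n - k) : ℝ) * (lam / (1 - lam)) ^ k * laguerre a k x := by
  have hc : (1 : ℝ) - lam ≠ 0 := sub_ne_zero.mpr fun h => hlam (by linarith)
  have step1 : (1 - lam) ^ n * ∑ k ∈ range (n + 1),
          (Nat.choose (n + a) (n - k) : ℝ) * (lam / (1 - lam)) ^ k * laguerre a k x
      = ∑ k ∈ range (n + 1), ∑ j ∈ range (k + 1),
          (Nat.choose (n + a) (n - k) : ℝ) * (Nat.choose (k + a) (k - j) : ℝ)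
            * (lam ^ k * (1 - lam) ^ (n - k))
            * ((-1) ^ j * x ^ j / (Nat.factorial j : ℝ)) := by
    rw [Finset.mul_sum]
    refine Finset.sum_congr rfl fun k hk => ?_
    have hk' : k ≤ n := Nat.lt_succ_iff.mp (Finset.mem_range.mp hk)
    have hpow : (1 - lam) ^ n * (lam / (1 - lam)) ^ k = lam ^ k * (1 - lam) ^ (n - k) := by
      have := pow_sub_mul_pow (1 - lam) hk'
      rw [div_pow]
      field_simp
      rw [← this]; ring
    unfold laguerre
    rw [Finset.mul_sum, Finset.mul_sum]
    refine Finset.sum_congr rfl fun j hj => ?_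
    rw [show (1 - lam) ^ n * ((Nat.choose (n + a) (n - k) : ℝ) * (lam / (1 - lam)) ^ k *
        ((-1) ^ j * (Nat.choose (k + a) (k - j) : ℝ) * x ^ j / (Nat.factorial j : ℝ)))
      = ((1 - lam) ^ n * (lam / (1 - lam)) ^ k) * ((Nat.choose (n + a) (n - k) : ℝ) *
        ((-1) ^ j * (Nat.choose (k + a) (k - j) : ℝ) * x ^ j / (Nat.factorial j : ℝ))) from by ring,
      hpow]
    ring
  rw [step1]
  simp only [Finset.range_eq_Ico]
  rw [← Finset.sum_Ico_Ico_comm 0 (n + 1) (fun j k =>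
      (Nat.choose (n + a) (n - k) : ℝ) * (Nat.choose (k + a) (k - j) : ℝ)
        * (lam ^ k * (1 - lam) ^ (n - k))
        * ((-1) ^ j * x ^ j / (Nat.factorial j : ℝ)))]
  unfold laguerre
  rw [Finset.range_eq_Ico]
  refine Finset.sum_congr rfl fun j hj => ?_
  have hj' : j ≤ n := by
    have := Finset.mem_Ico.mp hj; omega
  have hterm : ∀ k ∈ Finset.Ico j (n + 1),
      (Nat.choose (n + a) (n - k) : ℝ) * (Nat.choose (k + a) (k - j) : ℝ)
        * (lam ^ k * (1 - lam) ^ (n - k))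
        * ((-1) ^ j * x ^ j / (Nat.factorial j : ℝ))
      = ((Nat.choose (n - j) (k - j) : ℝ) * (lam ^ k * (1 - lam) ^ (n - k)))
        * ((Nat.choose (n + a) (n - j) : ℝ) * ((-1) ^ j * x ^ j / (Nat.factorial j : ℝ))) := by
    intro k hk
    have hk' := Finset.mem_Ico.mp hk
    have := choose_key a n j k (by omega) (by omega)
    have hcast : (Nat.choose (n + a) (n - k) : ℝ) * (Nat.choose (k + a) (k - j) : ℝ)
        = (Nat.choose (n + a) (n - j) : ℝ) * (Nat.choose (n - j) (k - j) : ℝ) := by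
      exact_mod_cast congrArg (Nat.cast : ℕ → ℝ) this
    rw [show (Nat.choose (n + a) (n - k) : ℝ) * (Nat.choose (k + a) (k - j) : ℝ)
        * (lam ^ k * (1 - lam) ^ (n - k))
        * ((-1) ^ j * x ^ j / (Nat.factorial j : ℝ))
      = ((Nat.choose (n + a) (n - k) : ℝ) * (Nat.choose (k + a) (k - j) : ℝ))
        * ((lam ^ k * (1 - lam) ^ (n - k)) * ((-1) ^ j * x ^ j / (Nat.factorial j : ℝ))) from by
        ring, hcast]
    ring
  rw [Finset.sum_congr rfl hterm, ← Finset.sum_mul, sum_key n j hj' lam]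
  rw [mul_pow]
  ring
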